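/- Let ε > 0, let B : [−ε, 0) → ℝ be continuous with sup_{x ∈ [−ε,0)} |B(x) + l/x| < ∞, and let g : [−ε, 0) → ℂ be continuous with |g(x)| ≤ C₀ (−x)^{1/2} for some C₀ > 0. If u : [−ε, 0) → ℂ is continuously differentiable, satisfies u'(x) − m B(x) u(x) = g(x) for all x ∈ [−ε, 0), and moreover |u(x)| ≤ C₀ (−x)^{1/2} on [−ε, 0), then there exists C₁ > 0 such that |u(x)| ≤ C₁ (−x)^{3/2} for all x ∈ [−ε, 0). -/

import Mathlib

open Set

/-- If `B` is continuous on `[−ε,0)` with `|B(x) + l/x|` bounded,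
`|g(x)| ≤ C₀(−x)^{1/2}`, `u' − mBu = g` on `[−ε,0)` and moreover
`|u(x)| ≤ C₀(−x)^{1/2}`, then `|u(x)| ≤ C₁ (−x)^{3/2}` on `[−ε,0)`. -/
theorem stmt_6 (m l : ℝ) (hm : 0 < m) (hl : 0 < l)
    (ε : ℝ) (hε : 0 < ε)
    (B : ℝ → ℝ) (hBcont : ContinuousOn B (Set.Ico (-ε) 0))
    (CB : ℝ) (hCB : ∀ x ∈ Set.Ico (-ε) (0:ℝ), |B x + l/x| ≤ CB)
    (g : ℝ → ℂ) (hgcont : ContinuousOn g (Set.Ico (-ε) 0))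
    (C₀ : ℝ) (hC₀ : 0 < C₀)
    (hgb : ∀ x ∈ Set.Ico (-ε) (0:ℝ), ‖g x‖ ≤ C₀ * (-x) ^ ((1:ℝ)/2))
    (u : ℝ → ℂ)
    (hu : ∀ x ∈ Set.Ico (-ε) (0:ℝ),
      HasDerivWithinAt u (g x + ((m * B x : ℝ) : ℂ) * u x) (Set.Ico (-ε) 0) x)
    (hub : ∀ x ∈ Set.Ico (-ε) (0:ℝ), ‖u x‖ ≤ C₀ * (-x) ^ ((1:ℝ)/2)) :
    ∃ C₁ > 0, ∀ x ∈ Set.Ico (-ε) (0:ℝ),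
      ‖u x‖ ≤ C₁ * (-x) ^ ((3:ℝ)/2) := by
  set S : Set ℝ := Set.Ico (-ε) 0 with hSdef
  have hCB0 : 0 ≤ CB := le_trans (abs_nonneg _)
    (hCB (-ε) ⟨le_rfl, neg_lt_zero.mpr hε⟩)
  set K : ℝ := Real.exp (m * CB * ε) with hKdef
  have hK0 : 0 < K := Real.exp_pos _
  set φ : ℝ → ℝ := fun x => ∫ t in (-ε)..x, m * B t with hφdef
  set w : ℝ → ℂ := fun t => Complex.exp (-((φ t : ℝ) : ℂ)) * u t with hwdef
  have hmB : ContinuousOn (fun s => m * B s) S := continuousOn_const.mul hBcont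
  have hsubS : ∀ a ∈ S, ∀ b ∈ S, Set.uIcc a b ⊆ S := by
    intro a ha b hb s hs
    exact ⟨le_trans (le_inf ha.1 hb.1) hs.1, lt_of_le_of_lt hs.2 (max_lt ha.2 hb.2)⟩
  -- exponent estimate
  have hexp : ∀ x ∈ S, ∀ t ∈ S, x ≤ t →
      Real.exp (φ x - φ t) ≤ K * ((-t) / (-x)) ^ (m * l) := by
    intro x hx t ht hxt
    have hxneg : x < 0 := hx.2
    have htneg : t < 0 := ht.2
    have hsubIcc : Set.uIcc x t ⊆ S := hsubS x hx t ht
    have hdiv : ContinuousOn (fun s : ℝ => l / s) S :=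
      continuousOn_const.div continuousOn_id fun s hs => ne_of_lt hs.2
    have hint1 : IntervalIntegrable (fun s => m * (B s + l / s)) MeasureTheory.volume x t :=
      ((continuousOn_const.mul (hBcont.add hdiv)).mono hsubIcc).intervalIntegrable
    have hint2 : IntervalIntegrable (fun s : ℝ => m * l * (1 / s)) MeasureTheory.volume x t :=
      ((continuousOn_const.mul (continuousOn_const.div continuousOn_id
        fun s hs => ne_of_lt hs.2)).mono hsubIcc).intervalIntegrable
    have hsplit : (∫ s in x..t, m * B s)
        = (∫ s in x..t, m * (B s + l / s)) - ∫ s in x..t, m * l * (1 / s) := by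
      rw [← intervalIntegral.integral_sub hint1 hint2]
      apply intervalIntegral.integral_congr
      intro s _
      field_simp
      ring
    have h0mem : (0 : ℝ) ∉ Set.uIcc x t := fun h0 => lt_irrefl (0:ℝ) (hsubIcc h0).2
    have hlog : (∫ s in x..t, (1:ℝ) / s) = Real.log (t / x) := integral_one_div h0mem
    have hφsub : φ x - φ t = -(∫ s in x..t, m * B s) := by
      have hI1 : IntervalIntegrable (fun s => m * B s) MeasureTheory.volume (-ε) x :=
        (hmB.mono (hsubS (-ε) ⟨le_rfl, neg_lt_zero.mpr hε⟩ x hx)).intervalIntegrable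
      have hI2 : IntervalIntegrable (fun s => m * B s) MeasureTheory.volume x t :=
        (hmB.mono hsubIcc).intervalIntegrable
      have := intervalIntegral.integral_add_adjacent_intervals hI1 hI2
      simp only [hφdef]
      linarith [this]
    have hI1bound : |∫ s in x..t, m * (B s + l / s)| ≤ m * CB * ε := by
      have h1 : ‖∫ s in x..t, m * (B s + l / s)‖ ≤ (m * CB) * |t - x| := by
        apply intervalIntegral.norm_integral_le_of_norm_le_const
        intro s hs
        rw [Set.uIoc_of_le hxt] at hs
        have hsS : s ∈ S := ⟨hx.1.trans (le_of_lt hs.1), lt_of_le_of_lt hs.2 htneg⟩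
        rw [Real.norm_eq_abs, abs_mul, abs_of_pos hm]
        exact mul_le_mul_of_nonneg_left (hCB s hsS) (le_of_lt hm)
      have h2 : |t - x| ≤ ε := by
        rw [abs_of_nonneg (by linarith)]
        have := hx.1
        linarith
      calc |∫ s in x..t, m * (B s + l / s)| ≤ (m * CB) * |t - x| := h1
        _ ≤ m * CB * ε := by
            apply mul_le_mul_of_nonneg_left h2
            positivity
    have hcore : φ x - φ t ≤ m * CB * ε + m * l * Real.log (t / x) := by
      rw [hφsub, hsplit]
      have h1 : (∫ s in x..t, m * l * (1 / s)) = m * l * Real.log (t / x) := by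
        rw [intervalIntegral.integral_const_mul, hlog]
      have h2 : -(∫ s in x..t, m * (B s + l / s)) ≤ m * CB * ε :=
        le_trans (neg_le_abs _) hI1bound
      linarith
    have hr : 0 < t / x := div_pos_of_neg_of_neg htneg hxneg
    calc Real.exp (φ x - φ t)
        ≤ Real.exp (m * CB * ε + m * l * Real.log (t / x)) := Real.exp_le_exp.mpr hcore
      _ = K * (t / x) ^ (m * l) := by
          rw [Real.exp_add, Real.rpow_def_of_pos hr, mul_comm (Real.log _)]
      _ = K * ((-t) / (-x)) ^ (m * l) := by rw [neg_div_neg_eq]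
  have hexpK : ∀ x ∈ S, ∀ t ∈ S, x ≤ t → Real.exp (φ x - φ t) ≤ K := by
    intro x hx t ht hxt
    have h1 := hexp x hx t ht hxt
    have hr1 : ((-t) / (-x)) ^ (m * l) ≤ 1 := by
      apply Real.rpow_le_one
      · apply div_nonneg <;> linarith [ht.2, hx.2]
      · rw [div_le_one (by linarith [hx.2])]
        linarith
      · positivity
    calc Real.exp (φ x - φ t) ≤ K * ((-t) / (-x)) ^ (m * l) := h1
      _ ≤ K * 1 := mul_le_mul_of_nonneg_left hr1 (le_of_lt hK0)
      _ = K := mul_one K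
  -- the main bound for x ≤ y
  have hbound : ∀ x ∈ S, ∀ y ∈ S, x ≤ y →
      ‖u x‖ ≤ (K * C₀ * (-x) ^ (-(m * l))) * (-y) ^ (m * l + 1/2)
        + K * C₀ * (-x) ^ ((3:ℝ)/2) := by
    intro x hx y hy hxy
    have hxneg : x < 0 := hx.2
    have hyneg : y < 0 := hy.2
    have hx0 : (0:ℝ) < -x := by linarith
    have hy0 : (0:ℝ) < -y := by linarith
    have hIccS : Set.Icc x y ⊆ S := fun s hs => ⟨hx.1.trans hs.1, lt_of_le_of_lt hs.2 hyneg⟩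
    have hεS : -ε ∈ S := ⟨le_rfl, neg_lt_zero.mpr hε⟩
    have hφIcc : ContinuousOn φ (Set.Icc x y) := by
      have hint0 : IntervalIntegrable (fun s => m * B s) MeasureTheory.volume (-ε) y :=
        (hmB.mono (hsubS (-ε) hεS y hy)).intervalIntegrable
      have h1 := intervalIntegral.continuousOn_primitive_interval' hint0 Set.left_mem_uIcc
      refine h1.mono ?_
      rw [Set.uIcc_of_le (hεS.1.trans (hx.1.trans hxy) : -ε ≤ y)]
      exact Set.Icc_subset_Icc_left hx.1
    have hucont : ContinuousOn u (Set.Icc x y) := fun t ht =>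
      ((hu t (hIccS ht)).continuousWithinAt).mono hIccS
    have hecont : ContinuousOn (fun t => Complex.exp (-((φ t : ℝ) : ℂ))) (Set.Icc x y) :=
      ((Complex.continuous_ofReal.comp_continuousOn hφIcc).neg).cexp
    have hwcont : ContinuousOn w (Set.Icc x y) := hecont.mul hucont
    have hintI : IntervalIntegrable (fun t => Complex.exp (-((φ t : ℝ) : ℂ)) * g t)
        MeasureTheory.volume x y := by
      apply ContinuousOn.intervalIntegrable
      rw [Set.uIcc_of_le hxy]
      exact hecont.mul (hgcont.mono hIccS)
    have hwderiv : ∀ t ∈ Set.Ioo x y,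
        HasDerivWithinAt w (Complex.exp (-((φ t : ℝ) : ℂ)) * g t) (Set.Ioi t) t := by
      intro t ht
      have htS : t ∈ S := ⟨hx.1.trans (le_of_lt ht.1), lt_trans ht.2 hyneg⟩
      have hSmem : S ∈ nhdsWithin t (Set.Ioi t) := by
        rw [mem_nhdsWithin]
        refine ⟨Set.Iio 0, isOpen_Iio, htS.2, ?_⟩
        rintro s ⟨hs1, hs2⟩
        exact ⟨htS.1.trans (le_of_lt hs2), hs1⟩
      have hφt : HasDerivWithinAt φ (m * B t) (Set.Ioi t) t := by
        have hAint : IntervalIntegrable (fun s => m * B s) MeasureTheory.volume (-ε) t :=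
          (hmB.mono (hsubS (-ε) ⟨le_rfl, neg_lt_zero.mpr hε⟩ t htS)).intervalIntegrable
        have hmeas : StronglyMeasurableAtFilter (fun s => m * B s)
            (nhdsWithin t (Set.Ioi t)) MeasureTheory.volume :=
          ⟨S, hSmem, (hmB.aestronglyMeasurable measurableSet_Ico)⟩
        have hcontt : ContinuousWithinAt (fun s => m * B s) (Set.Ioi t) t :=
          (hmB t htS).mono_of_mem_nhdsWithin hSmem
        exact (intervalIntegral.integral_hasDerivWithinAt_right hAint hmeas hcontt).mono
          Set.Ioi_subset_Ici_self
      have h1 : HasDerivWithinAt (fun s => ((φ s : ℝ) : ℂ)) (((m * B t : ℝ) : ℂ))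
          (Set.Ioi t) t := by
        simpa [Function.comp_def] using Complex.ofRealCLM.hasFDerivAt.comp_hasDerivWithinAt t hφt
      have h2 := (h1.neg).cexp
      have h3 := h2.mul ((hu t htS).mono_of_mem_nhdsWithin hSmem)
      convert h3 using 1
      · rfl
      · rfl
      simp only [Pi.neg_apply]
      push_cast
      ring
    have heq : (∫ t in x..y, Complex.exp (-((φ t : ℝ) : ℂ)) * g t) = w y - w x :=
      intervalIntegral.integral_eq_sub_of_hasDeriv_right_of_le hxy hwcont hwderiv hintI
    set I : ℂ := ∫ t in x..y, Complex.exp (-((φ t : ℝ) : ℂ)) * g t with hIdef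
    have hux : u x = Complex.exp ((φ x : ℝ) : ℂ) * (w y - I) := by
      have hwx : w y - I = w x := by rw [heq]; ring
      rw [hwx, hwdef]
      rw [← mul_assoc, ← Complex.exp_add]
      simp
    -- norms
    have hnormexp : ∀ z : ℝ, ‖Complex.exp ((z : ℝ) : ℂ)‖ = Real.exp z := by
      intro z
      rw [Complex.norm_exp, Complex.ofReal_re]
    have hnormexp' : ∀ z : ℝ, ‖Complex.exp (-((z : ℝ) : ℂ))‖ = Real.exp (-z) := by
      intro z
      rw [Complex.norm_exp]
      simp
    have hInorm : ‖I‖ ≤ (K * Real.exp (-(φ x)) * (C₀ * (-x) ^ ((1:ℝ)/2))) * |y - x| := by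
      apply intervalIntegral.norm_integral_le_of_norm_le_const
      intro t ht
      rw [Set.uIoc_of_le hxy] at ht
      have htS : t ∈ S := ⟨hx.1.trans (le_of_lt ht.1), lt_of_le_of_lt ht.2 hyneg⟩
      rw [norm_mul, hnormexp' (φ t)]
      have he : Real.exp (-(φ t)) ≤ K * Real.exp (-(φ x)) := by
        have h1 := hexpK x hx t htS (le_of_lt ht.1)
        have : Real.exp (-(φ t)) = Real.exp (φ x - φ t) * Real.exp (-(φ x)) := by
          rw [← Real.exp_add]; ring_nf
        rw [this]
        exact mul_le_mul_of_nonneg_right h1 (le_of_lt (Real.exp_pos _))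
      have hg : ‖g t‖ ≤ C₀ * (-x) ^ ((1:ℝ)/2) := by
        refine le_trans (hgb t htS) ?_
        apply mul_le_mul_of_nonneg_left _ (le_of_lt hC₀)
        apply Real.rpow_le_rpow (by linarith [htS.2]) (by linarith [ht.1]) (by norm_num)
      exact mul_le_mul he hg (norm_nonneg _) (by positivity)
    have hstep : ‖u x‖ ≤ Real.exp (φ x - φ y) * ‖u y‖
        + K * (C₀ * (-x) ^ ((1:ℝ)/2)) * |y - x| := by
      rw [hux, norm_mul, hnormexp (φ x)]
      have h1 : ‖w y - I‖ ≤ ‖w y‖ + ‖I‖ := norm_sub_le _ _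
      have hwy : ‖w y‖ = Real.exp (-(φ y)) * ‖u y‖ := by
        rw [hwdef]
        simp only []
        rw [norm_mul, hnormexp' (φ y)]
      have hepos : (0:ℝ) < Real.exp (φ x) := Real.exp_pos _
      calc Real.exp (φ x) * ‖w y - I‖
          ≤ Real.exp (φ x) * (Real.exp (-(φ y)) * ‖u y‖
            + (K * Real.exp (-(φ x)) * (C₀ * (-x) ^ ((1:ℝ)/2))) * |y - x|) := by
            apply mul_le_mul_of_nonneg_left _ (le_of_lt hepos)
            rw [← hwy] at *
            exact le_trans h1 (add_le_add_right hInorm _)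
        _ = Real.exp (φ x - φ y) * ‖u y‖ + K * (C₀ * (-x) ^ ((1:ℝ)/2)) * |y - x| := by
            have e1 : Real.exp (φ x - φ y) = Real.exp (φ x) * Real.exp (-(φ y)) := by
              rw [← Real.exp_add]; ring_nf
            have e2 : Real.exp (φ x) * Real.exp (-(φ x)) = 1 := by
              rw [← Real.exp_add]; simp
            linear_combination (-(‖u y‖)) * e1 + (K * (C₀ * (-x) ^ ((1:ℝ)/2)) * |y - x|) * e2
    -- finish the bound
    have hterm1 : Real.exp (φ x - φ y) * ‖u y‖
        ≤ (K * C₀ * (-x) ^ (-(m * l))) * (-y) ^ (m * l + 1/2) := by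
      have h1 := hexp x hx y hy hxy
      have h2 := hub y hy
      have hrw : K * ((-y) / (-x)) ^ (m * l) * (C₀ * (-y) ^ ((1:ℝ)/2))
          = (K * C₀ * (-x) ^ (-(m * l))) * (-y) ^ (m * l + 1/2) := by
        rw [Real.div_rpow (le_of_lt hy0) (le_of_lt hx0), Real.rpow_neg (le_of_lt hx0),
          Real.rpow_add hy0]
        field_simp
      calc Real.exp (φ x - φ y) * ‖u y‖
          ≤ (K * ((-y) / (-x)) ^ (m * l)) * (C₀ * (-y) ^ ((1:ℝ)/2)) := by
            apply mul_le_mul h1 h2 (norm_nonneg _)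
            positivity
        _ = (K * C₀ * (-x) ^ (-(m * l))) * (-y) ^ (m * l + 1/2) := hrw
    have hterm2 : K * (C₀ * (-x) ^ ((1:ℝ)/2)) * |y - x| ≤ K * C₀ * (-x) ^ ((3:ℝ)/2) := by
      have habs : |y - x| ≤ -x := by
        rw [abs_of_nonneg (by linarith)]
        linarith
      have hrw : (-x) ^ ((1:ℝ)/2) * (-x) = (-x) ^ ((3:ℝ)/2) := by
        nth_rewrite 2 [← Real.rpow_one (-x)]
        rw [← Real.rpow_add hx0]
        norm_num
      calc K * (C₀ * (-x) ^ ((1:ℝ)/2)) * |y - x|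
          ≤ K * (C₀ * (-x) ^ ((1:ℝ)/2)) * (-x) := by
            apply mul_le_mul_of_nonneg_left habs
            positivity
        _ = K * C₀ * (-x) ^ ((3:ℝ)/2) := by rw [← hrw]; ring
    linarith [hstep, hterm1, hterm2]
  -- take the limit y → 0⁻
  refine ⟨K * C₀, by positivity, ?_⟩
  intro x hx
  have hxneg : x < 0 := hx.2
  have hx0 : (0:ℝ) < -x := by linarith
  set c : ℝ := K * C₀ * (-x) ^ (-(m * l)) with hcdef
  set L : ℝ := K * C₀ * (-x) ^ ((3:ℝ)/2) with hLdef
  set p : ℝ := m * l + 1/2 with hpdef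
  have hp : 0 < p := by positivity
  have htt : Filter.Tendsto (fun y : ℝ => c * (-y) ^ p + L)
      (nhdsWithin 0 (Set.Iio 0)) (nhds (c * (0:ℝ) ^ p + L)) := by
    have h0 : Filter.Tendsto (fun y : ℝ => -y) (nhdsWithin 0 (Set.Iio 0)) (nhds 0) := by
      have h := (continuous_neg.tendsto (0:ℝ)).mono_left
        (nhdsWithin_le_nhds : nhdsWithin (0:ℝ) (Set.Iio 0) ≤ nhds 0)
      simpa using h
    have h1 : ContinuousAt (fun z : ℝ => z ^ p) 0 :=
      Real.continuousAt_rpow_const 0 p (Or.inr hp.le)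
    have h2 : Filter.Tendsto (fun y : ℝ => (-y) ^ p) (nhdsWithin 0 (Set.Iio 0))
        (nhds ((0:ℝ) ^ p)) := h1.tendsto.comp h0
    exact (h2.const_mul c).add_const L
  have hev : ∀ᶠ y in nhdsWithin 0 (Set.Iio 0), ‖u x‖ ≤ c * (-y) ^ p + L := by
    filter_upwards [Ioo_mem_nhdsLT_of_mem (Set.mem_Ioc.mpr ⟨hxneg, le_refl (0:ℝ)⟩)] with y hy
    exact hbound x hx y ⟨hx.1.trans (le_of_lt hy.1), hy.2⟩ (le_of_lt hy.1)
  have hfin : ‖u x‖ ≤ c * (0:ℝ) ^ p + L := ge_of_tendsto htt hev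
  rw [Real.zero_rpow (ne_of_gt hp), mul_zero, zero_add] at hfin
  exact hfin
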